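/- Let T_ν be the averaging operator on L²(G) of a finite group G, (T_ν f)(g) = Σ_h ν(h) f(h^{−1}g), where ν is a symmetric probability measure supported on a generating set S with every element of G expressible as a product of at most d elements of S, and each generator having probability at least η. Then the second-largest eigenvalue of T_ν satisfies λ₂(T_ν) ≤ 1 − η/d². -/

import Mathlib

noncomputable section

/-- Diaconis–Saloff-Coste comparison bound: if `ν` is a symmetric probability measure on a
finite group `G`, supported on a generating set `S` such that every group element is a product
of at most `d` elements of `S`, and every element of `S` has probability at least `η`, then
every eigenvalue `λ` of the averaging operator `T_ν` on the orthogonal complement of the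
constants satisfies `λ ≤ 1 − η/d²`. -/
theorem stmt5 {G : Type*} [Fintype G] [Group G] [DecidableEq G]
    (ν : G → ℝ) (hpos : ∀ g, 0 ≤ ν g) (hsum : ∑ g, ν g = 1)
    (hsym : ∀ g, ν g⁻¹ = ν g)
    (S : Finset G) (hsupp : ∀ g, ν g ≠ 0 → g ∈ S)
    (d : ℕ) (hd : 0 < d)
    (hgen : ∀ g : G, ∃ l : List G, l.length ≤ d ∧ (∀ x ∈ l, x ∈ S) ∧ l.prod = g)
    (η : ℝ) (hη : 0 < η) (hηS : ∀ s ∈ S, η ≤ ν s)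
    (T : Matrix G G ℝ) (hT : T = fun g g' => ν (g * g'⁻¹))
    (lam : ℝ) (v : G → ℝ) (hv : v ≠ 0) (horth : ∑ g, v g = 0)
    (heig : T.mulVec v = lam • v) :
    lam ≤ 1 - η / (d : ℝ) ^ 2 := by
  classical
  set N : ℝ := ∑ g, v g ^ 2 with hN
  have hNpos : 0 < N := by
    have hex : ∃ g, v g ≠ 0 := by
      by_contra h; push_neg at h; exact hv (funext h)
    obtain ⟨g0, hg0⟩ := hex
    exact Finset.sum_pos' (fun g _ => sq_nonneg _)
      ⟨g0, Finset.mem_univ _, by positivity⟩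
  -- left-shift invariance of sums
  have hshift : ∀ (x : G) (f : G → ℝ), ∑ g, f (x * g) = ∑ g, f g := by
    intro x f
    exact Fintype.sum_equiv (Equiv.mulLeft x) _ _ (fun g => rfl)
  set F : G → ℝ := fun x => ∑ g, (v g - v (x⁻¹ * g)) ^ 2 with hFdef
  have hFnonneg : ∀ x, 0 ≤ F x :=
    fun x => Finset.sum_nonneg fun g _ => sq_nonneg _
  -- mulVec formula
  have hTv : ∀ g, (T.mulVec v) g = ∑ s, ν s * v (s⁻¹ * g) := by
    intro g
    have e : G ≃ G := (Equiv.inv G).trans (Equiv.mulLeft g)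
    rw [hT]
    simp only [Matrix.mulVec, dotProduct]
    refine (Fintype.sum_equiv ((Equiv.inv G).trans (Equiv.mulLeft g))
      (fun g' => ν (g * g'⁻¹) * v g') (fun s => ν s * v (s⁻¹ * g)) ?_).symm.symm
    intro g'
    simp [mul_assoc]
  -- inner product with eigenvector
  have hinner : ∑ s, ν s * ∑ g, v g * v (s⁻¹ * g) = lam * N := by
    have h1 : ∑ g, v g * (T.mulVec v g) = lam * N := by
      rw [heig]
      simp only [Pi.smul_apply, smul_eq_mul, hN]
      rw [Finset.mul_sum]
      exact Finset.sum_congr rfl fun g _ => by ring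
    rw [← h1]
    calc ∑ s, ν s * ∑ g, v g * v (s⁻¹ * g)
        = ∑ s, ∑ g, v g * (ν s * v (s⁻¹ * g)) := by
          refine Finset.sum_congr rfl fun s _ => ?_
          rw [Finset.mul_sum]; exact Finset.sum_congr rfl fun g _ => by ring
      _ = ∑ g, ∑ s, v g * (ν s * v (s⁻¹ * g)) := Finset.sum_comm
      _ = ∑ g, v g * T.mulVec v g := by
          refine Finset.sum_congr rfl fun g _ => ?_
          rw [hTv, Finset.mul_sum]
  -- Dirichlet form identity
  set E : ℝ := ∑ s, ν s * F s with hE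
  have hEid : E = 2 * N - 2 * (lam * N) := by
    have hFs : ∀ s : G, F s = 2 * N - 2 * ∑ g, v g * v (s⁻¹ * g) := by
      intro s
      have h2 : ∑ g, v (s⁻¹ * g) ^ 2 = N := hshift s⁻¹ (fun g => v g ^ 2)
      have : F s = (∑ g, v g ^ 2) + (∑ g, v (s⁻¹ * g) ^ 2)
          - 2 * ∑ g, v g * v (s⁻¹ * g) := by
        rw [hFdef]
        simp only [← Finset.sum_add_distrib, ← Finset.sum_sub_distrib, Finset.mul_sum]
        exact Finset.sum_congr rfl fun g _ => by ring
      rw [this, h2, ← hN]; ring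
    calc E = ∑ s, (ν s * (2 * N) - 2 * (ν s * ∑ g, v g * v (s⁻¹ * g))) := by
            refine Finset.sum_congr rfl fun s _ => ?_
            rw [hFs s]; ring
      _ = (∑ s, ν s) * (2 * N) - 2 * ∑ s, ν s * ∑ g, v g * v (s⁻¹ * g) := by
            rw [Finset.sum_sub_distrib, ← Finset.sum_mul, ← Finset.mul_sum]
      _ = 2 * N - 2 * (lam * N) := by rw [hsum, hinner]; ring
  have hEnonneg : 0 ≤ E :=
    Finset.sum_nonneg fun s _ => mul_nonneg (hpos s) (hFnonneg s)
  -- single generator bound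
  have hgenbound : ∀ s ∈ S, F s ≤ E / η := by
    intro s hs
    rw [le_div_iff₀ hη, mul_comm]
    calc η * F s ≤ ν s * F s := mul_le_mul_of_nonneg_right (hηS s hs) (hFnonneg s)
      _ ≤ E := Finset.single_le_sum (f := fun s => ν s * F s)
          (fun t _ => mul_nonneg (hpos t) (hFnonneg t)) (Finset.mem_univ s)
  -- triangle inequality
  have htri : ∀ x y : G, Real.sqrt (F (x * y)) ≤ Real.sqrt (F x) + Real.sqrt (F y) := by
    intro x y
    set a : G → ℝ := fun g => v g - v (x⁻¹ * g) with ha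
    set b : G → ℝ := fun g => v (x⁻¹ * g) - v ((x * y)⁻¹ * g) with hb
    have hbsum : ∑ g, b g ^ 2 = F y := by
      have : ∀ g, b g = (fun u => v u - v (y⁻¹ * u)) (x⁻¹ * g) := by
        intro g; simp only [hb, mul_inv_rev, mul_assoc]
      calc ∑ g, b g ^ 2 = ∑ g, ((fun u => (v u - v (y⁻¹ * u)) ^ 2) (x⁻¹ * g)) := by
            refine Finset.sum_congr rfl fun g _ => ?_; rw [this g]
        _ = F y := hshift x⁻¹ (fun u => (v u - v (y⁻¹ * u)) ^ 2)
    have hcs : (∑ g, a g * b g) ≤ Real.sqrt (F x) * Real.sqrt (F y) := by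
      have h1 : (∑ g, a g * b g) ^ 2 ≤ (∑ g, a g ^ 2) * ∑ g, b g ^ 2 :=
        Finset.sum_mul_sq_le_sq_mul_sq _ _ _
      have h2 : (∑ g, a g ^ 2) = F x := rfl
      rw [h2, hbsum] at h1
      calc (∑ g, a g * b g) ≤ |∑ g, a g * b g| := le_abs_self _
        _ = Real.sqrt ((∑ g, a g * b g) ^ 2) := (Real.sqrt_sq_eq_abs _).symm
        _ ≤ Real.sqrt (F x * F y) := Real.sqrt_le_sqrt h1
        _ = Real.sqrt (F x) * Real.sqrt (F y) := Real.sqrt_mul (hFnonneg x) _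
    have hxy : F (x * y) = ∑ g, (a g + b g) ^ 2 := by
      refine Finset.sum_congr rfl fun g _ => ?_
      simp only [ha, hb]; ring_nf
    have hle : F (x * y) ≤ (Real.sqrt (F x) + Real.sqrt (F y)) ^ 2 := by
      have expand : ∑ g, (a g + b g) ^ 2
          = F x + 2 * (∑ g, a g * b g) + F y := by
        have : ∑ g, (a g + b g) ^ 2
            = ∑ g, (a g ^ 2 + 2 * (a g * b g) + b g ^ 2) := by
          refine Finset.sum_congr rfl fun g _ => by ring
        rw [this, Finset.sum_add_distrib, Finset.sum_add_distrib, ← Finset.mul_sum, hbsum]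
      have h3 : (Real.sqrt (F x) + Real.sqrt (F y)) ^ 2
          = F x + 2 * (Real.sqrt (F x) * Real.sqrt (F y)) + F y := by
        rw [add_sq, Real.sq_sqrt (hFnonneg x), Real.sq_sqrt (hFnonneg y)]; ring
      rw [hxy, expand, h3]
      nlinarith [hcs]
    calc Real.sqrt (F (x * y)) ≤ Real.sqrt ((Real.sqrt (F x) + Real.sqrt (F y)) ^ 2) :=
          Real.sqrt_le_sqrt hle
      _ = |Real.sqrt (F x) + Real.sqrt (F y)| := Real.sqrt_sq_eq_abs _
      _ = Real.sqrt (F x) + Real.sqrt (F y) := abs_of_nonneg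
          (by positivity)
  -- path bound by induction on lists
  have hpath : ∀ l : List G, (∀ x ∈ l, x ∈ S) →
      Real.sqrt (F l.prod) ≤ (l.length : ℝ) * Real.sqrt (E / η) := by
    intro l
    induction l with
    | nil =>
      intro _
      have : F (1 : G) = 0 := by
        simp [hFdef]
      simp [this]
    | cons s t ih =>
      intro hmem
      have hs : s ∈ S := hmem s List.mem_cons_self
      have ht : ∀ x ∈ t, x ∈ S := fun x hx => hmem x (List.mem_cons_of_mem s hx)
      have h1 : Real.sqrt (F s) ≤ Real.sqrt (E / η) :=
        Real.sqrt_le_sqrt (hgenbound s hs)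
      calc Real.sqrt (F (s :: t).prod) = Real.sqrt (F (s * t.prod)) := by
            rw [List.prod_cons]
        _ ≤ Real.sqrt (F s) + Real.sqrt (F t.prod) := htri s t.prod
        _ ≤ Real.sqrt (E / η) + (t.length : ℝ) * Real.sqrt (E / η) :=
            add_le_add h1 (ih ht)
        _ = ((s :: t).length : ℝ) * Real.sqrt (E / η) := by
            simp [List.length_cons]; ring
  -- bound for every group element
  have hFbound : ∀ x : G, F x ≤ (d : ℝ) ^ 2 * (E / η) := by
    intro x
    obtain ⟨l, hlen, hmem, hprod⟩ := hgen x
    have h1 : Real.sqrt (F x) ≤ (d : ℝ) * Real.sqrt (E / η) := by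
      rw [← hprod]
      refine (hpath l hmem).trans ?_
      exact mul_le_mul_of_nonneg_right (by exact_mod_cast hlen) (Real.sqrt_nonneg _)
    have h2 : F x = Real.sqrt (F x) ^ 2 := (Real.sq_sqrt (hFnonneg x)).symm
    rw [h2]
    calc Real.sqrt (F x) ^ 2 ≤ ((d : ℝ) * Real.sqrt (E / η)) ^ 2 := by
          refine pow_le_pow_left₀ (Real.sqrt_nonneg _) h1 2
      _ = (d : ℝ) ^ 2 * (E / η) := by
          rw [mul_pow, Real.sq_sqrt (div_nonneg hEnonneg hη.le)]
  -- total sum identity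
  have hG : Nonempty G := by
    by_contra h
    exact hv (funext fun g => absurd ⟨g⟩ h)
  have hcardpos : 0 < (Fintype.card G : ℝ) := by
    exact_mod_cast Fintype.card_pos
  have htotal : ∑ x, F x = 2 * (Fintype.card G : ℝ) * N := by
    have hcross : ∀ g : G, ∑ x, v (x⁻¹ * g) = 0 := by
      intro g
      rw [← horth]
      exact Fintype.sum_equiv ((Equiv.inv G).trans (Equiv.mulRight g))
        (fun x => v (x⁻¹ * g)) v (fun x => rfl)
    calc ∑ x, F x = ∑ x, ((∑ g, v g ^ 2) + (∑ g, v (x⁻¹ * g) ^ 2)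
          - 2 * ∑ g, v g * v (x⁻¹ * g)) := by
          refine Finset.sum_congr rfl fun x _ => ?_
          simp only [hFdef, ← Finset.sum_add_distrib, ← Finset.sum_sub_distrib,
            Finset.mul_sum]
          exact Finset.sum_congr rfl fun g _ => by ring
      _ = ∑ x : G, (N + N - 2 * ∑ g, v g * v (x⁻¹ * g)) := by
          refine Finset.sum_congr rfl fun x _ => ?_
          rw [← hN, hshift x⁻¹ (fun g => v g ^ 2), ← hN]
      _ = (Fintype.card G : ℝ) * (N + N) - 2 * ∑ x : G, ∑ g, v g * v (x⁻¹ * g) := by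
          rw [Finset.sum_sub_distrib, ← Finset.mul_sum]
          simp only [Finset.sum_const, Finset.card_univ, nsmul_eq_mul]
      _ = 2 * (Fintype.card G : ℝ) * N := by
          have : ∑ x : G, ∑ g, v g * v (x⁻¹ * g) = 0 := by
            rw [Finset.sum_comm]
            refine Finset.sum_eq_zero fun g _ => ?_
            rw [← Finset.mul_sum, hcross g, mul_zero]
          rw [this]; ring
  -- put everything together
  have hfinal : 2 * (Fintype.card G : ℝ) * N ≤ (Fintype.card G : ℝ) * ((d : ℝ) ^ 2 * (E / η)) := by
    rw [← htotal]
    calc ∑ x, F x ≤ ∑ _x : G, (d : ℝ) ^ 2 * (E / η) :=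
          Finset.sum_le_sum fun x _ => hFbound x
      _ = (Fintype.card G : ℝ) * ((d : ℝ) ^ 2 * (E / η)) := by
          simp [Finset.card_univ]
  have hdpos : (0 : ℝ) < (d : ℝ) ^ 2 := by positivity
  have key : 2 * N ≤ (d : ℝ) ^ 2 * (E / η) := by
    have := (mul_le_mul_iff_right₀ hcardpos).mp (by linarith [hfinal] : (Fintype.card G : ℝ) * (2 * N) ≤ (Fintype.card G : ℝ) * ((d : ℝ) ^ 2 * (E / η)))
    linarith
  have hE' : E = 2 * (1 - lam) * N := by rw [hEid]; ring
  rw [hE'] at key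
  -- 2N ≤ d^2 * (2(1-lam)N/η)  ⇒  η ≤ d^2 (1-lam)
  have h9 : η ≤ (d : ℝ) ^ 2 * (1 - lam) := by
    have h10 : 2 * N * η ≤ (d : ℝ) ^ 2 * (2 * (1 - lam) * N) := by
      rw [div_eq_mul_inv] at key
      calc 2 * N * η = (2 * N) * η := by ring
        _ ≤ ((d : ℝ) ^ 2 * (2 * (1 - lam) * N * η⁻¹)) * η :=
            mul_le_mul_of_nonneg_right key hη.le
        _ = (d : ℝ) ^ 2 * (2 * (1 - lam) * N) * (η⁻¹ * η) := by ring
        _ = (d : ℝ) ^ 2 * (2 * (1 - lam) * N) := by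
            rw [inv_mul_cancel₀ hη.ne', mul_one]
    nlinarith [hNpos]
  have h11 : η / (d : ℝ) ^ 2 ≤ 1 - lam := by
    rw [div_le_iff₀ hdpos]
    nlinarith [h9]
  linarith
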